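/- For any zero-error code for f with block length k and any a3 ∈ A^k, the entropy of the distribution of the label Z1 given X3 = a3 is bounded below by the entropy of the equivalence-class-size distribution: ∑_{z} (|{x1 ∈ A^k : φ1(x1, φ31(a3)) = z}| / |A|^k)·log₂(|A|^k / |{x1 : φ1(x1, φ31(a3)) = z}|) ≥ ∑_{C} (|C| / |A|^k)·log₂(|A|^k / |C|), where the left sum ranges over the strings z in the image of x1 ↦ φ1(x1, φ31(a3)) and the right sum ranges over the equivalence classes C of ≡^{a3}|_1 on A^k. -/

import Mathlib

open Classical

/-- A zero-error (variable-length) code for computing `f` componentwise with block length `k`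
on the diamond network: encoders `phi31, phi32` (from `s₃`), `phi1, phi2` (to the terminal)
and a decoder `psi` that recovers `f^k` with zero error. -/
structure ZECode (A B Z : Type*) (k : ℕ) (f : A → A → A → B) where
  phi31 : (Fin k → A) → List Z
  phi32 : (Fin k → A) → List Z
  phi1 : (Fin k → A) → List Z → List Z
  phi2 : (Fin k → A) → List Z → List Z
  psi : List Z → List Z → (Fin k → B)
  zero_error : ∀ x1 x2 x3 : Fin k → A,
    psi (phi1 x1 (phi31 x3)) (phi2 x2 (phi32 x3)) = fun i => f (x1 i) (x2 i) (x3 i)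

/-- Base-2 Shannon entropy of the random variable `W` when the underlying finite sample
space `Ω` carries the uniform distribution (convention `0·log(1/0) = 0`). -/
noncomputable def uH {Ω S : Type*} [Fintype Ω] (W : Ω → S) : ℝ :=
  ∑ s ∈ Finset.univ.image W,
    (((Finset.univ.filter fun ω => W ω = s).card : ℝ) / (Fintype.card Ω : ℝ)) *
      Real.logb 2 ((Fintype.card Ω : ℝ) / ((Finset.univ.filter fun ω => W ω = s).card : ℝ))

/-- Base-2 conditional Shannon entropy `H(W | V)` for the uniform distribution on `Ω`:
`H(W|V) = ∑_v P(V = v) · H(W | V = v)`, with the convention `0·log(1/0) = 0`. -/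
noncomputable def uCondH {Ω S T : Type*} [Fintype Ω] (W : Ω → S) (V : Ω → T) : ℝ :=
  ∑ v ∈ Finset.univ.image V, ∑ s ∈ Finset.univ.image W,
    (((Finset.univ.filter fun ω => W ω = s ∧ V ω = v).card : ℝ) / (Fintype.card Ω : ℝ)) *
      Real.logb 2 (((Finset.univ.filter fun ω => V ω = v).card : ℝ) /
        ((Finset.univ.filter fun ω => W ω = s ∧ V ω = v).card : ℝ))

/-- `x1 ≡^{a3} y1 |₁` : `f(x1, x2, a3) = f(y1, x2, a3)` for all `x2`. -/
def eqv1 {A B : Type*} (f : A → A → A → B) (a3 : A) (x y : A) : Prop :=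
  ∀ x2, f x x2 a3 = f y x2 a3

/-- `x2 ≡^{a3} y2 |₂` : `f(x1, x2, a3) = f(x1, y2, a3)` for all `x1`. -/
def eqv2 {A B : Type*} (f : A → A → A → B) (a3 : A) (x y : A) : Prop :=
  ∀ x1, f x1 x a3 = f x1 y a3

/-- Componentwise extension of `≡^{a3}|₁` to blocks of length `k`. -/
def eqv1k {A B : Type*} (f : A → A → A → B) {k : ℕ} (a3 : Fin k → A) (x y : Fin k → A) : Prop :=
  ∀ i, eqv1 f (a3 i) (x i) (y i)

/-- Componentwise extension of `≡^{a3}|₂` to blocks of length `k`. -/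
def eqv2k {A B : Type*} (f : A → A → A → B) {k : ℕ} (a3 : Fin k → A) (x y : Fin k → A) : Prop :=
  ∀ i, eqv2 f (a3 i) (x i) (y i)

/-- `≡^{a3}|₁` as a setoid on `A`. -/
def eqv1Setoid {A B : Type*} (f : A → A → A → B) (a3 : A) : Setoid A where
  r := eqv1 f a3
  iseqv := ⟨fun _ _ => rfl, fun h x2 => (h x2).symm, fun h h' x2 => (h x2).trans (h' x2)⟩

/-- `≡^{a3}|₂` as a setoid on `A`. -/
def eqv2Setoid {A B : Type*} (f : A → A → A → B) (a3 : A) : Setoid A where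
  r := eqv2 f a3
  iseqv := ⟨fun _ _ => rfl, fun h x1 => (h x1).symm, fun h h' x1 => (h x1).trans (h' x1)⟩

/-- `≡^{a3}|₁` as a setoid on `A^k`. -/
def eqv1kSetoid {A B : Type*} (f : A → A → A → B) {k : ℕ} (a3 : Fin k → A) :
    Setoid (Fin k → A) where
  r := eqv1k f a3
  iseqv := ⟨fun _ _ _ => rfl, fun h i x2 => (h i x2).symm,
    fun h h' i x2 => (h i x2).trans (h' i x2)⟩

/-- `≡^{a3}|₂` as a setoid on `A^k`. -/
def eqv2kSetoid {A B : Type*} (f : A → A → A → B) {k : ℕ} (a3 : Fin k → A) :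
    Setoid (Fin k → A) where
  r := eqv2k f a3
  iseqv := ⟨fun _ _ _ => rfl, fun h i x1 => (h i x1).symm,
    fun h h' i x1 => (h i x1).trans (h' i x1)⟩

/-- Auxiliary: if `V` factors through `W`, the "entropy"-type sum for `V` is at most that
for `W`, for any positive normalizer `N`. -/
lemma aux_entropy_le {Ω S T : Type*} [Fintype Ω] [Nonempty Ω]
    (W : Ω → S) (V : Ω → T) (key : ∀ x y, W x = W y → V x = V y)
    (N : ℝ) (hN : 0 < N) :
    ∑ q ∈ Finset.univ.image V,
      (((Finset.univ.filter fun x => V x = q).card : ℝ) / N) *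
        Real.logb 2 (N / ((Finset.univ.filter fun x => V x = q).card : ℝ)) ≤
    ∑ z ∈ Finset.univ.image W,
      (((Finset.univ.filter fun x => W x = z).card : ℝ) / N) *
        Real.logb 2 (N / ((Finset.univ.filter fun x => W x = z).card : ℝ)) := by
  classical
  set n : S → ℕ := fun z => (Finset.univ.filter fun x => W x = z).card with hn
  set m : T → ℕ := fun q => (Finset.univ.filter fun x => V x = q).card with hm
  let g : S → T := fun z =>
    if h : ∃ x, W x = z then V h.choose else V (Classical.arbitrary Ω)
  have hg : ∀ x, g (W x) = V x := by
    intro x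
    have h : ∃ y, W y = W x := ⟨x, rfl⟩
    simp only [g, dif_pos h]
    exact key _ _ h.choose_spec
  have himg : Finset.univ.image V = (Finset.univ.image W).image g := by
    rw [Finset.image_image]
    apply Finset.image_congr
    intro x _
    exact (hg x).symm
  have hfiber : ∀ q, m q = ∑ z ∈ (Finset.univ.image W).filter (fun z => g z = q), n z := by
    intro q
    have h1 : (Finset.univ.filter fun x => V x = q).card =
        ∑ z ∈ (Finset.univ.image W).filter (fun z => g z = q),
          ((Finset.univ.filter fun x => V x = q).filter fun x => W x = z).card := by
      apply Finset.card_eq_sum_card_fiberwise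
      intro x hx
      simp only [Finset.mem_coe, Finset.mem_filter, Finset.mem_univ, true_and] at hx ⊢
      exact ⟨Finset.mem_image_of_mem _ (Finset.mem_univ x), by rw [hg]; exact hx⟩
    change (Finset.univ.filter fun x => V x = q).card = _
    rw [h1]
    apply Finset.sum_congr rfl
    intro z hz
    simp only [Finset.mem_filter] at hz
    show _ = (Finset.univ.filter fun x => W x = z).card
    congr 1
    rw [Finset.filter_filter]
    apply Finset.filter_congr
    intro x _
    constructor
    · rintro ⟨-, h⟩; exact h
    · intro h; exact ⟨by rw [← hg, h, hz.2], h⟩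
  rw [himg]
  rw [← Finset.sum_fiberwise_of_maps_to (g := g)
      (fun z hz => Finset.mem_image_of_mem g hz)
      (fun z => ((n z : ℝ) / N) * Real.logb 2 (N / (n z : ℝ)))]
  apply Finset.sum_le_sum
  intro q hq
  obtain ⟨z0, hz0, hz0q⟩ := Finset.mem_image.mp hq
  have hz0mem : z0 ∈ (Finset.univ.image W).filter (fun z => g z = q) :=
    Finset.mem_filter.mpr ⟨hz0, hz0q⟩
  have hnpos : ∀ z ∈ Finset.univ.image W, 0 < n z := by
    intro z hz
    obtain ⟨x, -, hx⟩ := Finset.mem_image.mp hz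
    exact Finset.card_pos.mpr ⟨x, Finset.mem_filter.mpr ⟨Finset.mem_univ x, hx⟩⟩
  have hmpos : 0 < m q := by
    rw [hfiber q]
    calc 0 < n z0 := hnpos z0 hz0
    _ ≤ _ := Finset.single_le_sum (fun z _ => Nat.zero_le _) hz0mem
  have hle : ∀ z ∈ (Finset.univ.image W).filter (fun z => g z = q), n z ≤ m q := by
    intro z hz
    rw [hfiber q]
    exact Finset.single_le_sum (fun z _ => Nat.zero_le _) hz
  calc ((m q : ℝ) / N) * Real.logb 2 (N / (m q : ℝ))
      = ∑ z ∈ (Finset.univ.image W).filter (fun z => g z = q),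
        ((n z : ℝ) / N) * Real.logb 2 (N / (m q : ℝ)) := by
        rw [← Finset.sum_mul, ← Finset.sum_div]
        rw [show ∑ z ∈ (Finset.univ.image W).filter (fun z => g z = q), (n z : ℝ)
            = (m q : ℝ) by rw [hfiber q]; push_cast; ring]
    _ ≤ ∑ z ∈ (Finset.univ.image W).filter (fun z => g z = q),
        ((n z : ℝ) / N) * Real.logb 2 (N / (n z : ℝ)) := by
        apply Finset.sum_le_sum
        intro z hz
        have hz' := Finset.mem_filter.mp hz
        have hnz : (0:ℝ) < n z := by exact_mod_cast hnpos z hz'.1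
        have hmz : (n z : ℝ) ≤ (m q : ℝ) := by exact_mod_cast hle z hz
        have h0 : (0:ℝ) ≤ (n z : ℝ) / N := div_nonneg hnz.le hN.le
        have hmq : (0:ℝ) < (m q : ℝ) := by exact_mod_cast hmpos
        apply mul_le_mul_of_nonneg_left _ h0
        apply Real.logb_le_logb_of_le one_lt_two (div_pos hN hmq)
        exact div_le_div_of_nonneg_left hN.le hnz hmz

/-- Entropy of the label distribution `Z1 | X3 = a3` (with `X1` uniform) is at
least the entropy of the `≡^{a3}|₁` equivalence-class-size distribution. -/
theorem stmt_9 {A B Z : Type*} [Fintype A] [Fintype B] [Fintype Z]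
    (hA : 1 < Fintype.card A) (hZ : 1 < Fintype.card Z)
    {k : ℕ} (hk : 1 ≤ k) (f : A → A → A → B) (c : ZECode A B Z k f)
    (a3 : Fin k → A) :
    ∑ z ∈ Finset.univ.image (fun x1 : Fin k → A => c.phi1 x1 (c.phi31 a3)),
      (((Finset.univ.filter fun x1 : Fin k → A => c.phi1 x1 (c.phi31 a3) = z).card : ℝ) /
          (Fintype.card A : ℝ) ^ k) *
        Real.logb 2 ((Fintype.card A : ℝ) ^ k /
          ((Finset.univ.filter fun x1 : Fin k → A => c.phi1 x1 (c.phi31 a3) = z).card : ℝ)) ≥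
    ∑ q ∈ Finset.univ.image (Quotient.mk (eqv1kSetoid f a3)),
      (((Finset.univ.filter fun x : Fin k → A =>
          Quotient.mk (eqv1kSetoid f a3) x = q).card : ℝ) / (Fintype.card A : ℝ) ^ k) *
        Real.logb 2 ((Fintype.card A : ℝ) ^ k /
          ((Finset.univ.filter fun x : Fin k → A =>
            Quotient.mk (eqv1kSetoid f a3) x = q).card : ℝ)) := by
  classical
  have hApos : 0 < Fintype.card A := by omega
  haveI : Nonempty A := Fintype.card_pos_iff.mp hApos
  have hN : (0:ℝ) < (Fintype.card A : ℝ) ^ k := by positivity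
  have key : ∀ x y : Fin k → A, c.phi1 x (c.phi31 a3) = c.phi1 y (c.phi31 a3) →
      Quotient.mk (eqv1kSetoid f a3) x = Quotient.mk (eqv1kSetoid f a3) y := by
    intro x y h
    apply Quotient.sound
    intro i b
    have h1 := c.zero_error x (fun _ => b) a3
    have h2 := c.zero_error y (fun _ => b) a3
    have hh : (fun i => f (x i) b (a3 i)) = fun i => f (y i) b (a3 i) := by
      rw [← h1, ← h2, h]
    exact congrFun hh i
  rw [ge_iff_le]
  have h := aux_entropy_le (fun x1 : Fin k → A => c.phi1 x1 (c.phi31 a3))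
    (Quotient.mk (eqv1kSetoid f a3)) key _ hN
  convert h using 2 <;> congr!
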